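/- Let ρ_1, …, ρ_N be density matrices on ℂ^d, let p ∈ ℝ^N be a probability vector, and let ρ̄ = Σ_{i=1}^N p_i ρ_i. Let k be a positive integer with k ≤ d and let η ≥ 0, and suppose the sum of the k largest eigenvalues of ρ̄ is at least 1 − η. Then, with c = 2 − √2, Σ_{i=1}^N p_i D_Tr(ρ_i, ρ̄) ≤ (√k / (c√2)) · ( Σ_{i=1}^N Σ_{j=1}^N p_i p_j D_HS(ρ_i, ρ_j)² )^{1/2} + η. -/

import Mathlib

open Matrix Finset
open scoped ComplexOrder

/-- The trace norm `‖A‖₁ = Tr √(Aᴴ A)` of a complex matrix. -/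
noncomputable def traceNorm {d : ℕ} (A : Matrix (Fin d) (Fin d) ℂ) : ℝ :=
  (((Matrix.posSemidef_conjTranspose_mul_self A).1.eigenvectorUnitary : Matrix (Fin d) (Fin d) ℂ) *
    diagonal (((↑) : ℝ → ℂ) ∘ Real.sqrt ∘ (Matrix.posSemidef_conjTranspose_mul_self A).1.eigenvalues) *
    (star (Matrix.posSemidef_conjTranspose_mul_self A).1.eigenvectorUnitary :
      Matrix (Fin d) (Fin d) ℂ)).trace.re


/-- The trace distance `D_Tr(ρ,σ) = ½‖ρ − σ‖₁`. -/
noncomputable def DTr {d : ℕ} (ρ σ : Matrix (Fin d) (Fin d) ℂ) : ℝ :=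
  traceNorm (ρ - σ) / 2

/-- The Hilbert–Schmidt distance `D_HS(ρ,σ) = ‖ρ − σ‖₂ = √(Tr[(ρ−σ)ᴴ(ρ−σ)])`. -/
noncomputable def DHS {d : ℕ} (ρ σ : Matrix (Fin d) (Fin d) ℂ) : ℝ :=
  Real.sqrt (((ρ - σ)ᴴ * (ρ - σ)).trace.re)


lemma trace_re_nonneg {d : ℕ} {X : Matrix (Fin d) (Fin d) ℂ} (hX : X.PosSemidef) :
    0 ≤ X.trace.re := by
  have h : ∀ j, 0 ≤ (X j j).re := by
    intro j
    have := hX.re_dotProduct_nonneg (Pi.single j 1)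
    simpa [dotProduct, mulVec, Pi.single_apply] using this
  simp only [Matrix.trace, Matrix.diag]
  rw [Complex.re_sum]
  exact Finset.sum_nonneg fun j _ => h j

lemma trace_mul_re_nonneg {d : ℕ} {X Y : Matrix (Fin d) (Fin d) ℂ}
    (hX : X.PosSemidef) (hY : Y.PosSemidef) : 0 ≤ (X * Y).trace.re := by
  obtain ⟨B, hB⟩ : ∃ B : Matrix (Fin d) (Fin d) ℂ, X = Bᴴ * B := by
    open scoped MatrixOrder in
    obtain ⟨B, hB⟩ := CStarAlgebra.nonneg_iff_eq_star_mul_self.mp hX.nonneg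
    exact ⟨B, hB⟩
  have h2 : (X * Y).trace = (B * Y * Bᴴ).trace := by
    rw [hB, mul_assoc, trace_mul_comm]
  rw [h2]
  exact trace_re_nonneg (hY.mul_mul_conjTranspose_same B)

lemma trace_conjTranspose_mul {d : ℕ} (A B : Matrix (Fin d) (Fin d) ℂ) :
    (Aᴴ * B).trace = ∑ x : Fin d × Fin d, (starRingEnd ℂ) (A x.1 x.2) * B x.1 x.2 := by
  rw [← Finset.univ_product_univ, Finset.sum_product]
  simp only [Matrix.trace, Matrix.diag, Matrix.mul_apply, Matrix.conjTranspose_apply]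
  rw [Finset.sum_comm]
  rfl

lemma trace_conjTranspose_mul_self_re {d : ℕ} (A : Matrix (Fin d) (Fin d) ℂ) :
    (Aᴴ * A).trace.re = ∑ x : Fin d × Fin d, ‖A x.1 x.2‖ ^ 2 := by
  rw [trace_conjTranspose_mul, Complex.re_sum]
  congr 1; ext x
  rw [mul_comm, Complex.mul_conj, Complex.ofReal_re, Complex.sq_norm]

/-- Cauchy–Schwarz for the Frobenius inner product. -/
lemma re_trace_conjTranspose_mul_le {d : ℕ} (M A : Matrix (Fin d) (Fin d) ℂ) :
    (Mᴴ * A).trace.re ≤ Real.sqrt ((Mᴴ * M).trace.re) * Real.sqrt ((Aᴴ * A).trace.re) := by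
  rw [trace_conjTranspose_mul, Complex.re_sum, trace_conjTranspose_mul_self_re,
    trace_conjTranspose_mul_self_re]
  have h1 : ∀ x : Fin d × Fin d, ((starRingEnd ℂ) (M x.1 x.2) * A x.1 x.2).re ≤
      ‖M x.1 x.2‖ * ‖A x.1 x.2‖ := by
    intro x
    calc ((starRingEnd ℂ) (M x.1 x.2) * A x.1 x.2).re
        ≤ ‖(starRingEnd ℂ) (M x.1 x.2) * A x.1 x.2‖ := Complex.re_le_norm _
      _ = ‖M x.1 x.2‖ * ‖A x.1 x.2‖ := by
          rw [norm_mul, Complex.norm_conj]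
  refine le_trans (Finset.sum_le_sum fun x _ => h1 x) ?_
  have h2 := Finset.sum_mul_sq_le_sq_mul_sq Finset.univ
    (fun x : Fin d × Fin d => ‖M x.1 x.2‖)
    (fun x : Fin d × Fin d => ‖A x.1 x.2‖)
  have h3 : (0:ℝ) ≤ ∑ x : Fin d × Fin d, ‖M x.1 x.2‖ * ‖A x.1 x.2‖ :=
    Finset.sum_nonneg fun x _ => mul_nonneg (norm_nonneg _) (norm_nonneg _)
  calc ∑ x : Fin d × Fin d, ‖M x.1 x.2‖ * ‖A x.1 x.2‖
      = Real.sqrt ((∑ x : Fin d × Fin d, ‖M x.1 x.2‖ * ‖A x.1 x.2‖) ^ 2) :=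
        (Real.sqrt_sq h3).symm
    _ ≤ Real.sqrt ((∑ x : Fin d × Fin d, ‖M x.1 x.2‖ ^ 2) *
          ∑ x : Fin d × Fin d, ‖A x.1 x.2‖ ^ 2) := Real.sqrt_le_sqrt h2
    _ = _ := Real.sqrt_mul (Finset.sum_nonneg fun x _ => sq_nonneg _) _


open scoped MatrixOrder in
lemma traceNorm_eq_of_sq {d : ℕ} (A T : Matrix (Fin d) (Fin d) ℂ) (hT : T.PosSemidef)
    (hsq : T ^ 2 = Aᴴ * A) : traceNorm A = T.trace.re := by
  have h1 : traceNorm A =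
      ((Matrix.posSemidef_conjTranspose_mul_self A).1.cfc Real.sqrt).trace.re := rfl
  rw [h1, ← IsHermitian.cfc_eq, ← cfcₙ_eq_cfc (hf0 := Real.sqrt_zero),
    ← CFC.sqrt_eq_real_sqrt (Aᴴ * A) (Matrix.posSemidef_conjTranspose_mul_self A).nonneg,
    CFC.sqrt_unique (by rw [← hsq, pow_two]) hT.nonneg]

section UDU
variable {d : ℕ} {U : Matrix (Fin d) (Fin d) ℂ}

lemma UDU_mul (hU' : star U * U = 1) (f g : Fin d → ℂ) :
    (U * diagonal f * star U) * (U * diagonal g * star U)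
      = U * diagonal (fun i => f i * g i) * star U := by
  have h1 : (U * diagonal f * star U) * (U * diagonal g * star U)
      = U * diagonal f * (star U * U) * (diagonal g * star U) := by noncomm_ring
  rw [h1, hU']
  have h2 : U * diagonal f * 1 * (diagonal g * star U)
      = U * (diagonal f * diagonal g) * star U := by noncomm_ring
  rw [h2, diagonal_mul_diagonal]

lemma UDU_trace (hU' : star U * U = 1) (f : Fin d → ℂ) :
    (U * diagonal f * star U).trace = ∑ i, f i := by
  rw [trace_mul_comm, ← mul_assoc, hU', one_mul, trace_diagonal]

lemma UDU_conjTranspose (f : Fin d → ℝ) :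
    (U * diagonal (fun i => (f i : ℂ)) * star U)ᴴ
      = U * diagonal (fun i => (f i : ℂ)) * star U := by
  have hstar : star (fun i => (f i : ℂ)) = fun i => (f i : ℂ) :=
    funext fun i => Complex.conj_ofReal _
  simp only [conjTranspose_mul, ← Matrix.star_eq_conjTranspose, star_star,
    Matrix.star_eq_conjTranspose, diagonal_conjTranspose, hstar, Matrix.mul_assoc]
  rw [conjTranspose_conjTranspose]

lemma UDU_posSemidef (f : Fin d → ℝ) (hf : ∀ i, 0 ≤ f i) :
    (U * diagonal (fun i => (f i : ℂ)) * star U).PosSemidef := by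
  have hD : (diagonal (fun i => (f i : ℂ))).PosSemidef := by
    apply PosSemidef.diagonal
    intro i
    simpa using Complex.zero_le_real.mpr (hf i)
  exact hD.mul_mul_conjTranspose_same U

lemma UDU_one (hU : U * star U = 1) :
    U * diagonal (fun _ : Fin d => (1:ℂ)) * star U = 1 := by
  rw [show (diagonal fun _ : Fin d => (1:ℂ)) = (1 : Matrix (Fin d) (Fin d) ℂ) from diagonal_one,
    mul_one, hU]

/-- trace norm of a unitarily diagonalized matrix with real eigenvalues -/
lemma traceNorm_UDU (hU' : star U * U = 1) (lam : Fin d → ℝ)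
    (X : Matrix (Fin d) (Fin d) ℂ)
    (hspec : X = U * diagonal (fun i => (lam i : ℂ)) * star U) :
    traceNorm X = ∑ i, |lam i| := by
  subst hspec
  set T : Matrix (Fin d) (Fin d) ℂ :=
    U * diagonal (fun i => ((|lam i| : ℝ) : ℂ)) * star U with hTdef
  have hT : T.PosSemidef := UDU_posSemidef _ (fun i => abs_nonneg _)
  have hsq : T ^ 2 = (U * diagonal (fun i => (lam i : ℂ)) * star U)ᴴ
      * (U * diagonal (fun i => (lam i : ℂ)) * star U) := by
    rw [UDU_conjTranspose, pow_two, hTdef, UDU_mul hU', UDU_mul hU']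
    have : (fun i => ((|lam i| : ℝ) : ℂ) * ((|lam i| : ℝ) : ℂ))
        = fun i => ((lam i : ℝ) : ℂ) * ((lam i : ℝ) : ℂ) := funext fun i => by
      rw [← Complex.ofReal_mul, ← Complex.ofReal_mul, ← abs_mul, abs_mul_self]
    rw [this]
  have := traceNorm_eq_of_sq _ T hT hsq
  rw [this, hTdef, UDU_trace hU', Complex.re_sum]
  simp

/-- the sign matrix -/
lemma exists_sign_matrix (hU : U * star U = 1) (hU' : star U * U = 1) (lam : Fin d → ℝ)
    (X : Matrix (Fin d) (Fin d) ℂ)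
    (hspec : X = U * diagonal (fun i => (lam i : ℂ)) * star U) :
    ∃ C : Matrix (Fin d) (Fin d) ℂ, Cᴴ = C ∧ C * C = 1 ∧
      (C * X).trace.re = traceNorm X ∧ (1 - C).PosSemidef ∧ (1 + C).PosSemidef := by
  set s : Fin d → ℝ := fun i => if lam i < 0 then -1 else 1 with hs
  refine ⟨U * diagonal (fun i => (s i : ℂ)) * star U, UDU_conjTranspose s, ?_, ?_, ?_, ?_⟩
  · rw [UDU_mul hU']
    have : (fun i => (s i : ℂ) * (s i : ℂ)) = fun _ => (1:ℂ) := by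
      ext i
      rw [hs]
      by_cases h : lam i < 0 <;> simp [h]
    rw [this, UDU_one hU]
  · rw [traceNorm_UDU hU' lam X hspec, hspec, UDU_mul hU', UDU_trace hU']
    have : (fun i => (s i : ℂ) * (lam i : ℂ)) = fun i => ((|lam i| : ℝ) : ℂ) := by
      ext i
      rw [hs, ← Complex.ofReal_mul]
      by_cases h : lam i < 0
      · simp [h, abs_of_neg h]
      · simp [h, abs_of_nonneg (not_lt.mp h)]
    rw [this, Complex.re_sum]
    simp
  · have h1 : (1 : Matrix (Fin d) (Fin d) ℂ) - U * diagonal (fun i => (s i : ℂ)) * star U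
        = U * diagonal (fun i => ((1 - s i : ℝ) : ℂ)) * star U := by
      rw [← UDU_one hU (d := d)]
      rw [show (U * diagonal (fun _ : Fin d => (1:ℂ)) * star U) -
        U * diagonal (fun i => (s i : ℂ)) * star U
          = U * (diagonal (fun _ : Fin d => (1:ℂ)) - diagonal (fun i => (s i : ℂ))) * star U by
          noncomm_ring, diagonal_sub]
      push_cast
      rfl
    rw [h1]
    refine UDU_posSemidef _ fun i => ?_
    rw [hs]
    by_cases h : lam i < 0 <;> simp [h] <;> norm_num
  · have h1 : (1 : Matrix (Fin d) (Fin d) ℂ) + U * diagonal (fun i => (s i : ℂ)) * star U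
        = U * diagonal (fun i => ((1 + s i : ℝ) : ℂ)) * star U := by
      rw [← UDU_one hU (d := d)]
      rw [show (U * diagonal (fun _ : Fin d => (1:ℂ)) * star U) +
        U * diagonal (fun i => (s i : ℂ)) * star U
          = U * (diagonal (fun _ : Fin d => (1:ℂ)) + diagonal (fun i => (s i : ℂ))) * star U by
          noncomm_ring, diagonal_add]
      push_cast
      rfl
    rw [h1]
    refine UDU_posSemidef _ fun i => ?_
    rw [hs]
    by_cases h : lam i < 0 <;> simp [h] <;> norm_num

lemma exists_projector {d : ℕ} {U : Matrix (Fin d) (Fin d) ℂ} (hU : U * star U = 1) (hU' : star U * U = 1) (lam : Fin d → ℝ)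
    (X : Matrix (Fin d) (Fin d) ℂ)
    (hspec : X = U * diagonal (fun i => (lam i : ℂ)) * star U) (S : Finset (Fin d)) :
    ∃ P : Matrix (Fin d) (Fin d) ℂ, Pᴴ = P ∧ P * P = P ∧ P.trace = (S.card : ℂ) ∧
      ((1 : Matrix (Fin d) (Fin d) ℂ) - P).PosSemidef ∧
      ((P * X).trace.re = ∑ i ∈ S, lam i) := by
  set g : Fin d → ℝ := fun i => if i ∈ S then 1 else 0 with hg
  refine ⟨U * diagonal (fun i => (g i : ℂ)) * star U, UDU_conjTranspose g, ?_, ?_, ?_, ?_⟩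
  · rw [UDU_mul hU']
    have : (fun i => (g i : ℂ) * (g i : ℂ)) = fun i => (g i : ℂ) := by
      ext i
      rw [hg]
      by_cases h : i ∈ S <;> simp [h]
    rw [this]
  · rw [UDU_trace hU']
    rw [hg]
    have hco : ∀ x, ((if x ∈ S then (1:ℝ) else 0 : ℝ) : ℂ) = if x ∈ S then 1 else 0 :=
      fun x => by split <;> simp
    simp only [hco]
    rw [Finset.sum_ite_mem, Finset.univ_inter, Finset.sum_const]
    simp
  · have h1 : (1 : Matrix (Fin d) (Fin d) ℂ) - U * diagonal (fun i => (g i : ℂ)) * star U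
        = U * diagonal (fun i => ((1 - g i : ℝ) : ℂ)) * star U := by
      rw [← UDU_one hU (d := d)]
      rw [show (U * diagonal (fun _ : Fin d => (1:ℂ)) * star U) -
        U * diagonal (fun i => (g i : ℂ)) * star U
          = U * (diagonal (fun _ : Fin d => (1:ℂ)) - diagonal (fun i => (g i : ℂ))) * star U by
          noncomm_ring, diagonal_sub]
      push_cast
      rfl
    rw [h1]
    refine UDU_posSemidef _ fun i => ?_
    rw [hg]
    by_cases h : i ∈ S <;> simp [h]
  · rw [hspec, UDU_mul hU', UDU_trace hU', Complex.re_sum]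
    rw [hg]
    calc (∑ i : Fin d, (((if i ∈ S then (1:ℝ) else 0 : ℝ) : ℂ) * (lam i : ℂ)).re)
        = ∑ i : Fin d, (if i ∈ S then lam i else 0) := by
          congr 1; ext i
          by_cases h : i ∈ S <;> simp [h]
      _ = ∑ i ∈ S, lam i := by rw [Finset.sum_ite_mem, Finset.univ_inter]

end UDU


lemma core_ineq {d k : ℕ} (A ρi ρb P C : Matrix (Fin d) (Fin d) ℂ)
    (hA : A = ρi - ρb)
    (hρi : ρi.PosSemidef) (hρb : ρb.PosSemidef)
    (hPH : Pᴴ = P) (hPP : P * P = P) (hPtr : P.trace = (k : ℂ))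
    (hCH : Cᴴ = C) (hCC : C * C = 1)
    (hCtr : (C * A).trace.re = traceNorm A)
    (h1C : ((1 : Matrix (Fin d) (Fin d) ℂ) - C).PosSemidef)
    (h1C' : ((1 : Matrix (Fin d) (Fin d) ℂ) + C).PosSemidef) :
    traceNorm A ≤ Real.sqrt (2 * k) * Real.sqrt ((Aᴴ * A).trace.re)
      + (((1 : Matrix (Fin d) (Fin d) ℂ) - P) * ρi).trace.re
      + (((1 : Matrix (Fin d) (Fin d) ℂ) - P) * ρb).trace.re := by
  set Q : Matrix (Fin d) (Fin d) ℂ := 1 - P with hQdef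
  have hQH : Qᴴ = Q := by rw [hQdef, conjTranspose_sub, conjTranspose_one, hPH]
  have hPQ : P * Q = 0 := by rw [hQdef, mul_sub, mul_one, hPP, sub_self]
  have hQP : Q * P = 0 := by rw [hQdef, sub_mul, one_mul, hPP, sub_self]
  have hQQ : Q * Q = Q := by
    rw [hQdef, sub_mul, one_mul, mul_sub, mul_one, hPP]
    abel
  have hPQ1 : P + Q = 1 := by rw [hQdef]; abel
  set M : Matrix (Fin d) (Fin d) ℂ := P * C * P + P * C * Q + Q * C * P with hMdef
  have hMH : Mᴴ = M := by
    rw [hMdef]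
    simp only [conjTranspose_add, conjTranspose_mul, hPH, hCH, hQH, Matrix.mul_assoc]
    abel
  -- split C
  have hsplit : C = M + Q * C * Q := by rw [hMdef, hQdef]; noncomm_ring
  have htr_split : (C * A).trace = (M * A).trace + (Q * C * Q * A).trace := by
    conv_lhs => rw [hsplit]
    rw [add_mul, trace_add]
  -- step D : ‖M‖₂² ≤ 2k
  have haa : (P*C*P)*(P*C*P) = P*C*P*C*P := by
    rw [show (P*C*P)*(P*C*P) = P*C*(P*P)*(C*P) by noncomm_ring, hPP]; noncomm_ring
  have hab : (P*C*P)*(P*C*Q) = P*C*P*C*Q := by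
    rw [show (P*C*P)*(P*C*Q) = P*C*(P*P)*(C*Q) by noncomm_ring, hPP]; noncomm_ring
  have hac : (P*C*P)*(Q*C*P) = 0 := by
    rw [show (P*C*P)*(Q*C*P) = P*C*(P*Q)*(C*P) by noncomm_ring, hPQ]; simp
  have hba : (P*C*Q)*(P*C*P) = 0 := by
    rw [show (P*C*Q)*(P*C*P) = P*C*(Q*P)*(C*P) by noncomm_ring, hQP]; simp
  have hbb : (P*C*Q)*(P*C*Q) = 0 := by
    rw [show (P*C*Q)*(P*C*Q) = P*C*(Q*P)*(C*Q) by noncomm_ring, hQP]; simp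
  have hbc : (P*C*Q)*(Q*C*P) = P*C*Q*C*P := by
    rw [show (P*C*Q)*(Q*C*P) = P*C*(Q*Q)*(C*P) by noncomm_ring, hQQ]; noncomm_ring
  have hca : (Q*C*P)*(P*C*P) = Q*C*P*C*P := by
    rw [show (Q*C*P)*(P*C*P) = Q*C*(P*P)*(C*P) by noncomm_ring, hPP]; noncomm_ring
  have hcb : (Q*C*P)*(P*C*Q) = Q*C*P*C*Q := by
    rw [show (Q*C*P)*(P*C*Q) = Q*C*(P*P)*(C*Q) by noncomm_ring, hPP]; noncomm_ring
  have hcc : (Q*C*P)*(Q*C*P) = 0 := by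
    rw [show (Q*C*P)*(Q*C*P) = Q*C*(P*Q)*(C*P) by noncomm_ring, hPQ]; simp
  have hMM : M * M = P*C*P*C*P + P*C*P*C*Q + P*C*Q*C*P + Q*C*P*C*P + Q*C*P*C*Q := by
    rw [hMdef]
    rw [add_mul, add_mul, mul_add, mul_add, mul_add, mul_add, mul_add, mul_add,
      haa, hab, hac, hba, hbb, hbc, hca, hcb, hcc]
    abel
  have htr0 : (P*C*P*C*Q).trace = 0 := by
    rw [show P*C*P*C*Q = (P*C*P*C)*Q from by noncomm_ring, trace_mul_comm,
      show Q*(P*C*P*C) = (Q*P)*(C*P*C) by noncomm_ring, hQP]; simp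
  have htr0' : (Q*C*P*C*P).trace = 0 := by
    rw [show Q*C*P*C*P = (Q*C*P*C)*P from by noncomm_ring, trace_mul_comm,
      show P*(Q*C*P*C) = (P*Q)*(C*P*C) by noncomm_ring, hPQ]; simp
  have ht3a : (Q*C*P*C*Q).trace = (C*P*C*Q).trace := by
    rw [show Q*C*P*C*Q = (Q*C*P*C)*Q from by noncomm_ring,
      trace_mul_comm (Q*C*P*C) Q,
      show Q*(Q*C*P*C) = (Q*Q)*(C*P*C) by noncomm_ring, hQQ,
      trace_mul_comm Q (C*P*C)]
  have ht3b : (P*C*Q*C*P).trace = (C*P*C*Q).trace := by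
    rw [show P*C*Q*C*P = (P*C*Q*C)*P from by noncomm_ring,
      trace_mul_comm (P*C*Q*C) P,
      show P*(P*C*Q*C) = (P*P)*(C*Q*C) by noncomm_ring, hPP,
      trace_mul_comm P (C*Q*C),
      show (C*Q*C)*P = (C*Q)*(C*P) by noncomm_ring,
      trace_mul_comm (C*Q) (C*P),
      show (C*P)*(C*Q) = C*P*C*Q by noncomm_ring]
  have ht3t2 : (Q*C*P*C*Q).trace = (P*C*Q*C*P).trace := by rw [ht3a, ht3b]
  have hkey : P*C*P*C*P + P*C*Q*C*P = P := by
    have h1 : P*C*P*C*P + P*C*Q*C*P = P*C*(P+Q)*(C*P) := by noncomm_ring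
    rw [h1, hPQ1, mul_one, show P*C*(C*P) = P*(C*C)*P by noncomm_ring, hCC, mul_one, hPP]
  have ht1nn : 0 ≤ (P*C*P*C*P).trace.re := by
    have hH : (P*C*P)ᴴ = P*C*P := by
      simp only [conjTranspose_mul, hPH, hCH, Matrix.mul_assoc]
    have : (P*C*P)ᴴ * (P*C*P) = P*C*P*C*P := by rw [hH, haa]
    rw [← this]
    exact trace_re_nonneg (Matrix.posSemidef_conjTranspose_mul_self _)
  have ht2nn : 0 ≤ (P*C*Q*C*P).trace.re := by
    have hH : (Q*C*P)ᴴ = P*C*Q := by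
      simp only [conjTranspose_mul, hPH, hCH, hQH, Matrix.mul_assoc]
    have : (Q*C*P)ᴴ * (Q*C*P) = P*C*Q*C*P := by rw [hH, hbc]
    rw [← this]
    exact trace_re_nonneg (Matrix.posSemidef_conjTranspose_mul_self _)
  have hMM2k : (Mᴴ * M).trace.re ≤ 2 * k := by
    have hsum := congrArg (fun X : Matrix (Fin d) (Fin d) ℂ => X.trace.re) hkey
    simp only [trace_add, Complex.add_re, hPtr, Complex.natCast_re] at hsum
    rw [hMH, hMM]
    simp only [trace_add, Complex.add_re, htr0, htr0', ht3t2, Complex.zero_re]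
    linarith
  -- step C
  have hC1 : (M * A).trace.re ≤ Real.sqrt (2 * k) * Real.sqrt ((Aᴴ * A).trace.re) := by
    have h := re_trace_conjTranspose_mul_le M A
    rw [hMH] at h
    refine h.trans (mul_le_mul_of_nonneg_right ?_ (Real.sqrt_nonneg _))
    rw [hMH] at hMM2k
    exact Real.sqrt_le_sqrt hMM2k
  -- step E
  have hE : (Q * C * Q * A).trace.re ≤ (Q * ρi).trace.re + (Q * ρb).trace.re := by
    have hqcq1 : 0 ≤ ((Q * (1 - C) * Q) * ρi).trace.re := by
      have hpsd : (Q * (1 - C) * Qᴴ).PosSemidef := h1C.mul_mul_conjTranspose_same Q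
      rw [hQH] at hpsd
      exact trace_mul_re_nonneg hpsd hρi
    have hqcq2 : 0 ≤ ((Q * (1 + C) * Q) * ρb).trace.re := by
      have hpsd : (Q * (1 + C) * Qᴴ).PosSemidef := h1C'.mul_mul_conjTranspose_same Q
      rw [hQH] at hpsd
      exact trace_mul_re_nonneg hpsd hρb
    have hid1 : (Q * (1 - C) * Q) * ρi = Q * ρi - Q*C*Q*ρi := by
      rw [show (Q * (1 - C) * Q) * ρi = (Q*Q)*ρi - Q*C*Q*ρi by noncomm_ring, hQQ]
    have hid2 : (Q * (1 + C) * Q) * ρb = Q * ρb + Q*C*Q*ρb := by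
      rw [show (Q * (1 + C) * Q) * ρb = (Q*Q)*ρb + Q*C*Q*ρb by noncomm_ring, hQQ]
    rw [hid1, trace_sub, Complex.sub_re] at hqcq1
    rw [hid2, trace_add, Complex.add_re] at hqcq2
    have hsplitA : (Q*C*Q*A).trace.re = (Q*C*Q*ρi).trace.re - (Q*C*Q*ρb).trace.re := by
      rw [hA, mul_sub, trace_sub, Complex.sub_re]
    rw [hsplitA]
    linarith
  -- combine
  have := congrArg Complex.re htr_split
  rw [Complex.add_re, hCtr] at this
  rw [this]
  linarith

lemma posSemidef_smul_real {d : ℕ} {A : Matrix (Fin d) (Fin d) ℂ} (hA : A.PosSemidef)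
    {c : ℝ} (hc : 0 ≤ c) : ((c : ℂ) • A).PosSemidef := by
  exact hA.smul (Complex.zero_le_real.mpr hc)

lemma herm_spec {d : ℕ} {X : Matrix (Fin d) (Fin d) ℂ} (hX : X.IsHermitian) :
    X = (hX.eigenvectorUnitary : Matrix (Fin d) (Fin d) ℂ) *
      diagonal (fun i => (hX.eigenvalues i : ℂ)) *
      star (hX.eigenvectorUnitary : Matrix (Fin d) (Fin d) ℂ) := by
  have h := hX.spectral_theorem
  rw [Unitary.conjStarAlgAut_apply] at h
  exact h

noncomputable def matE {d : ℕ} : Matrix (Fin d) (Fin d) ℂ →ₗ[ℂ] EuclideanSpace ℂ (Fin d × Fin d) where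
  toFun A := (WithLp.equiv 2 _).symm (fun x => A x.1 x.2)
  map_add' := by intros; rfl
  map_smul' := by intros; rfl

lemma matE_norm {d : ℕ} (Z : Matrix (Fin d) (Fin d) ℂ) :
    Real.sqrt ((Zᴴ * Z).trace.re) = ‖matE Z‖ := by
  rw [EuclideanSpace.norm_eq, trace_conjTranspose_mul_self_re]
  congr 1

set_option maxHeartbeats 2000000 in
/-- If the sum of the `k` largest eigenvalues of `ρ̄` is at least `1 − η`, then
with `c = 2 − √2`,
`Σᵢ pᵢ D_Tr(ρᵢ, ρ̄) ≤ (√k/(c√2)) · (Σᵢⱼ pᵢ pⱼ D_HS(ρᵢ,ρⱼ)²)^{1/2} + η`. -/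
theorem meanTraceDist_le_sqrt_meanSquaredHS_rank (d N k : ℕ)
    (hk : 0 < k) (hkd : k ≤ d) (η : ℝ) (hη : 0 ≤ η)
    (ρ : Fin N → Matrix (Fin d) (Fin d) ℂ)
    (hρ : ∀ i, (ρ i).PosSemidef ∧ (ρ i).trace = 1)
    (p : Fin N → ℝ) (hp : ∀ i, 0 ≤ p i) (hps : ∑ i, p i = 1)
    (ρbar : Matrix (Fin d) (Fin d) ℂ) (hbar : ρbar = ∑ i, (p i : ℂ) • ρ i)
    (hherm : ρbar.IsHermitian)
    (heig : ∃ S : Finset (Fin d), S.card = k ∧ 1 - η ≤ ∑ i ∈ S, hherm.eigenvalues i) :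
    ∑ i, p i * DTr (ρ i) ρbar
      ≤ (Real.sqrt k / ((2 - Real.sqrt 2) * Real.sqrt 2)) *
        Real.sqrt (∑ i, ∑ j, p i * p j * (DHS (ρ i) (ρ j)) ^ 2) + η := by
  obtain ⟨S, hScard, hSsum⟩ := heig
  have hpsC : ∑ j, (p j : ℂ) = 1 := by
    rw [← Complex.ofReal_sum, hps, Complex.ofReal_one]
  -- the projector
  obtain ⟨P, hPH, hPP, hPtr, hQpsd, hPtrX⟩ := exists_projector
    (Matrix.mem_unitaryGroup_iff.mp hherm.eigenvectorUnitary.2)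
    (Matrix.mem_unitaryGroup_iff'.mp hherm.eigenvectorUnitary.2)
    hherm.eigenvalues ρbar (herm_spec hherm) S
  rw [hScard] at hPtr
  -- basic facts about ρbar
  have hbarpsd : ρbar.PosSemidef := by
    rw [hbar]
    apply Finset.sum_induction _ _ (fun a b (ha : a.PosSemidef) hb => ha.add hb)
      Matrix.PosSemidef.zero
    intro i _
    exact posSemidef_smul_real (hρ i).1 (hp i)
  have hbartr : ρbar.trace = 1 := by
    rw [hbar, trace_sum]
    simp only [trace_smul, smul_eq_mul]
    calc ∑ i, (p i : ℂ) * (ρ i).trace = ∑ i, (p i : ℂ) := by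
          apply Finset.sum_congr rfl; intro i _; rw [(hρ i).2, mul_one]
      _ = 1 := hpsC
  have hQbar : (((1 : Matrix (Fin d) (Fin d) ℂ) - P) * ρbar).trace.re ≤ η := by
    have h1 : ((1 : Matrix (Fin d) (Fin d) ℂ) - P) * ρbar = ρbar - P * ρbar := by
      rw [sub_mul, one_mul]
    rw [h1, trace_sub, Complex.sub_re, hbartr, Complex.one_re, hPtrX]
    linarith
  -- per-state bound
  set c : ℝ := Real.sqrt (2 * k) / 2 with hc
  have hper : ∀ i, DTr (ρ i) ρbar ≤ c * DHS (ρ i) ρbar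
      + (((1 : Matrix (Fin d) (Fin d) ℂ) - P) * ρ i).trace.re / 2
      + (((1 : Matrix (Fin d) (Fin d) ℂ) - P) * ρbar).trace.re / 2 := by
    intro i
    have hAherm : (ρ i - ρbar).IsHermitian := (hρ i).1.1.sub hherm
    obtain ⟨C, hCH, hCC, hCtr, h1C, h1C'⟩ := exists_sign_matrix
      (Matrix.mem_unitaryGroup_iff.mp hAherm.eigenvectorUnitary.2)
      (Matrix.mem_unitaryGroup_iff'.mp hAherm.eigenvectorUnitary.2)
      hAherm.eigenvalues _ (herm_spec hAherm)
    have h := core_ineq (ρ i - ρbar) (ρ i) ρbar P C rfl (hρ i).1 hbarpsd hPH hPP hPtr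
      hCH hCC hCtr h1C h1C'
    have hdhs : Real.sqrt (((ρ i - ρbar)ᴴ * (ρ i - ρbar)).trace.re) = DHS (ρ i) ρbar := rfl
    rw [hdhs] at h
    have hDTr : DTr (ρ i) ρbar = traceNorm (ρ i - ρbar) / 2 := rfl
    rw [hDTr, hc]
    rw [div_mul_eq_mul_div]
    linarith
  -- weighted triangle inequality for DHS
  have htri : ∀ i, DHS (ρ i) ρbar ≤ ∑ j, p j * DHS (ρ i) (ρ j) := by
    intro i
    have hId : ρ i - ρbar = ∑ j, (p j : ℂ) • (ρ i - ρ j) := by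
      rw [hbar]
      simp only [smul_sub, Finset.sum_sub_distrib]
      congr 1
      rw [← Finset.sum_smul, hpsC, one_smul]
    have h1 : DHS (ρ i) ρbar = ‖matE (ρ i - ρbar)‖ := matE_norm _
    have h2 : ∀ j, DHS (ρ i) (ρ j) = ‖matE (ρ i - ρ j)‖ := fun j => matE_norm _
    rw [h1, hId, map_sum]
    refine (norm_sum_le _ _).trans ?_
    apply Finset.sum_le_sum
    intro j _
    rw [_root_.map_smul, norm_smul, h2 j]
    simp [Complex.norm_real, abs_of_nonneg (hp j)]
  -- Cauchy-Schwarz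
  have hT0 : (0:ℝ) ≤ Real.sqrt (∑ i, ∑ j, p i * p j * (DHS (ρ i) (ρ j)) ^ 2) :=
    Real.sqrt_nonneg _
  have hCS : ∑ i, ∑ j, (p i * p j) * DHS (ρ i) (ρ j)
      ≤ Real.sqrt (∑ i, ∑ j, p i * p j * (DHS (ρ i) (ρ j)) ^ 2) := by
    rw [← Finset.sum_product' (f := fun i j => (p i * p j) * DHS (ρ i) (ρ j)),
      ← Finset.sum_product' (f := fun i j => p i * p j * (DHS (ρ i) (ρ j)) ^ 2)]
    set T : Finset (Fin N × Fin N) := Finset.univ ×ˢ Finset.univ with hT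
    have hfg : ∀ x : Fin N × Fin N, (p x.1 * p x.2) * DHS (ρ x.1) (ρ x.2)
        = (Real.sqrt (p x.1 * p x.2)) * (Real.sqrt (p x.1 * p x.2) * DHS (ρ x.1) (ρ x.2)) := by
      intro x
      rw [← mul_assoc, Real.mul_self_sqrt (mul_nonneg (hp _) (hp _))]
    have hcs2 := Finset.sum_mul_sq_le_sq_mul_sq T
      (fun x => Real.sqrt (p x.1 * p x.2))
      (fun x => Real.sqrt (p x.1 * p x.2) * DHS (ρ x.1) (ρ x.2))
    have hf2 : ∑ x ∈ T, (Real.sqrt (p x.1 * p x.2)) ^ 2 = 1 := by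
      have : ∀ x : Fin N × Fin N, (Real.sqrt (p x.1 * p x.2)) ^ 2 = p x.1 * p x.2 := fun x =>
        Real.sq_sqrt (mul_nonneg (hp _) (hp _))
      rw [Finset.sum_congr rfl fun x _ => this x, hT, Finset.sum_product]
      simp only [← Finset.mul_sum]
      rw [← Finset.sum_mul, hps, one_mul]
    have hg2 : ∀ x ∈ T, (Real.sqrt (p x.1 * p x.2) * DHS (ρ x.1) (ρ x.2)) ^ 2
        = p x.1 * p x.2 * (DHS (ρ x.1) (ρ x.2)) ^ 2 := by
      intro x _
      rw [mul_pow, Real.sq_sqrt (mul_nonneg (hp _) (hp _))]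
    rw [Finset.sum_congr rfl fun x _ => hfg x, ← Finset.sum_congr rfl hg2]
    have hnn : 0 ≤ ∑ x ∈ T, Real.sqrt (p x.1 * p x.2) *
        (Real.sqrt (p x.1 * p x.2) * DHS (ρ x.1) (ρ x.2)) := by
      apply Finset.sum_nonneg
      intro x _
      have h0 : (0:ℝ) ≤ DHS (ρ x.1) (ρ x.2) := Real.sqrt_nonneg _
      positivity
    calc ∑ x ∈ T, Real.sqrt (p x.1 * p x.2) * (Real.sqrt (p x.1 * p x.2) * DHS (ρ x.1) (ρ x.2))
        = Real.sqrt ((∑ x ∈ T, Real.sqrt (p x.1 * p x.2) *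
            (Real.sqrt (p x.1 * p x.2) * DHS (ρ x.1) (ρ x.2))) ^ 2) := (Real.sqrt_sq hnn).symm
      _ ≤ Real.sqrt ((∑ x ∈ T, Real.sqrt (p x.1 * p x.2) ^ 2) *
            ∑ x ∈ T, (Real.sqrt (p x.1 * p x.2) * DHS (ρ x.1) (ρ x.2)) ^ 2 ) :=
          Real.sqrt_le_sqrt hcs2
      _ = Real.sqrt (∑ x ∈ T, (Real.sqrt (p x.1 * p x.2) * DHS (ρ x.1) (ρ x.2)) ^ 2) := by
          rw [hf2, one_mul]
  -- constant comparison
  have hs2 : Real.sqrt 2 ^ 2 = 2 := Real.sq_sqrt (by norm_num)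
  have hs1 : (1:ℝ) ≤ Real.sqrt 2 := by nlinarith [Real.sqrt_nonneg 2]
  have hslt : Real.sqrt 2 < 2 := by nlinarith [Real.sqrt_nonneg 2]
  have hden : 0 < (2 - Real.sqrt 2) * Real.sqrt 2 := by nlinarith
  have hconst : c ≤ Real.sqrt k / ((2 - Real.sqrt 2) * Real.sqrt 2) := by
    rw [hc, Real.sqrt_mul (by norm_num : (0:ℝ) ≤ 2), div_le_div_iff₀ (by norm_num) hden]
    have hk0 : (0:ℝ) ≤ Real.sqrt k := Real.sqrt_nonneg _
    nlinarith [mul_nonneg hk0 (by linarith : (0:ℝ) ≤ Real.sqrt 2 - 1)]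
  have hc0 : 0 ≤ c := by rw [hc]; positivity
  -- sum of the weighted per-state bounds
  have hsum_e : ∑ i, p i * (((1 : Matrix (Fin d) (Fin d) ℂ) - P) * ρ i).trace.re
      = (((1 : Matrix (Fin d) (Fin d) ℂ) - P) * ρbar).trace.re := by
    rw [hbar, Matrix.mul_sum, trace_sum, Complex.re_sum]
    apply Finset.sum_congr rfl
    intro i _
    rw [Matrix.mul_smul, trace_smul, smul_eq_mul, Complex.re_ofReal_mul]
  have h5 : ∑ i, p i * DHS (ρ i) ρbar ≤ ∑ i, ∑ j, (p i * p j) * DHS (ρ i) (ρ j) := by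
    apply Finset.sum_le_sum
    intro i _
    calc p i * DHS (ρ i) ρbar ≤ p i * ∑ j, p j * DHS (ρ i) (ρ j) :=
          mul_le_mul_of_nonneg_left (htri i) (hp i)
      _ = ∑ j, (p i * p j) * DHS (ρ i) (ρ j) := by
          rw [Finset.mul_sum]
          apply Finset.sum_congr rfl
          intro j _
          ring
  calc ∑ i, p i * DTr (ρ i) ρbar
      ≤ ∑ i, p i * (c * DHS (ρ i) ρbar
          + (((1 : Matrix (Fin d) (Fin d) ℂ) - P) * ρ i).trace.re / 2
          + (((1 : Matrix (Fin d) (Fin d) ℂ) - P) * ρbar).trace.re / 2) := by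
        apply Finset.sum_le_sum
        intro i _
        exact mul_le_mul_of_nonneg_left (hper i) (hp i)
    _ = c * (∑ i, p i * DHS (ρ i) ρbar)
          + (∑ i, p i * (((1 : Matrix (Fin d) (Fin d) ℂ) - P) * ρ i).trace.re) / 2
          + (((1 : Matrix (Fin d) (Fin d) ℂ) - P) * ρbar).trace.re / 2 * (∑ i, p i) := by
        rw [Finset.mul_sum, Finset.sum_div, Finset.mul_sum, ← Finset.sum_add_distrib,
          ← Finset.sum_add_distrib]
        apply Finset.sum_congr rfl
        intro i _
        ring
    _ ≤ c * (∑ i, ∑ j, (p i * p j) * DHS (ρ i) (ρ j)) + η := by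
        rw [hsum_e, hps, mul_one]
        have := mul_le_mul_of_nonneg_left h5 hc0
        linarith
    _ ≤ c * Real.sqrt (∑ i, ∑ j, p i * p j * (DHS (ρ i) (ρ j)) ^ 2) + η := by
        have := mul_le_mul_of_nonneg_left hCS hc0
        linarith
    _ ≤ (Real.sqrt k / ((2 - Real.sqrt 2) * Real.sqrt 2)) *
          Real.sqrt (∑ i, ∑ j, p i * p j * (DHS (ρ i) (ρ j)) ^ 2) + η := by
        have := mul_le_mul_of_nonneg_right hconst hT0
        linarith
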